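/- Fix y ∈ (−1, 1). For all real x > 0 and t > 0: the function x' ↦ F(x', y, t) has derivative −t·√(1 − y²)/(t² + x² − 2·t·x·y) at the point x' = x, and the function t' ↦ F(x, y, t') has derivative x·√(1 − y²)/(t² + x² − 2·t·x·y) at the point t' = t. -/

import Mathlib

/-- `F(x, y, t) = arccos((x·y − t)/√(t² + x² − 2·t·x·y))`. -/
noncomputable def F (x y t : ℝ) : ℝ :=
  Real.arccos ((x * y - t) / Real.sqrt (t ^ 2 + x ^ 2 - 2 * t * x * y))

lemma aux_Q_pos {y x t : ℝ} (hy : y ∈ Set.Ioo (-1 : ℝ) 1) (hx : 0 < x) (ht : 0 < t) :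
    0 < t ^ 2 + x ^ 2 - 2 * t * x * y := by
  obtain ⟨h1, h2⟩ := hy
  nlinarith [sq_nonneg (t - x), sq_nonneg (t + x), mul_pos ht hx]

/-- For `y ∈ (−1, 1)`, `x > 0`, `t > 0`: the partial derivative of `F` in its first
variable at `x` is `−t·√(1 − y²)/(t² + x² − 2·t·x·y)`, and the partial derivative in
its third variable at `t` is `x·√(1 − y²)/(t² + x² − 2·t·x·y)`. -/
theorem stmt_11 (y : ℝ) (hy : y ∈ Set.Ioo (-1 : ℝ) 1) (x t : ℝ)
    (hx : 0 < x) (ht : 0 < t) :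
    HasDerivAt (fun x' : ℝ => F x' y t)
      (-(t * Real.sqrt (1 - y ^ 2)) / (t ^ 2 + x ^ 2 - 2 * t * x * y)) x ∧
    HasDerivAt (fun t' : ℝ => F x y t')
      (x * Real.sqrt (1 - y ^ 2) / (t ^ 2 + x ^ 2 - 2 * t * x * y)) t := by
  obtain ⟨hy1, hy2⟩ := hy
  have hQ : 0 < t ^ 2 + x ^ 2 - 2 * t * x * y := aux_Q_pos ⟨hy1, hy2⟩ hx ht
  have hs : 0 < Real.sqrt (t ^ 2 + x ^ 2 - 2 * t * x * y) := Real.sqrt_pos.mpr hQ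
  have hs2 : (Real.sqrt (t ^ 2 + x ^ 2 - 2 * t * x * y)) ^ 2 = t ^ 2 + x ^ 2 - 2 * t * x * y :=
    Real.sq_sqrt hQ.le
  have hw2 : (Real.sqrt (1 - y ^ 2)) ^ 2 = 1 - y ^ 2 := Real.sq_sqrt (by nlinarith)
  have hw : 0 < Real.sqrt (1 - y ^ 2) := Real.sqrt_pos.mpr (by nlinarith)
  set s := Real.sqrt (t ^ 2 + x ^ 2 - 2 * t * x * y) with hsdef
  set w := Real.sqrt (1 - y ^ 2) with hwdef
  set g : ℝ := (x * y - t) / s with hgdef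
  have hg2 : g ^ 2 < 1 := by
    rw [hgdef, div_pow, hs2, div_lt_one hQ]
    nlinarith [mul_pos (mul_pos hx hx) (show (0:ℝ) < 1 - y ^ 2 by nlinarith)]
  have hgne1 : g ≠ 1 := by nlinarith
  have hgnem1 : g ≠ -1 := by nlinarith
  have hkey : Real.sqrt (1 - g ^ 2) = x * w / s := by
    have h1 : 1 - g ^ 2 = x ^ 2 * (1 - y ^ 2) / (t ^ 2 + x ^ 2 - 2 * t * x * y) := by
      rw [hgdef, div_pow, hs2]
      rw [eq_div_iff hQ.ne', sub_mul, div_mul_cancel₀ _ hQ.ne']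
      ring
    rw [h1, Real.sqrt_div (by nlinarith : (0:ℝ) ≤ x ^ 2 * (1 - y ^ 2)), Real.sqrt_mul (sq_nonneg x),
      Real.sqrt_sq hx.le, ← hsdef, ← hwdef]
  have harc := Real.hasDerivAt_arccos hgnem1 hgne1
  constructor
  · -- derivative in x
    have hQ' : HasDerivAt (fun x' : ℝ => t ^ 2 + x' ^ 2 - 2 * t * x' * y)
        (2 * x - 2 * t * y) x := by
      have h1 := ((hasDerivAt_pow 2 x).const_add (t ^ 2)).sub
        (((hasDerivAt_id x).const_mul (2 * t)).mul_const y)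
      refine h1.congr_deriv (Eq.symm ?_)
      push_cast
      ring
    have hv : HasDerivAt (fun x' : ℝ => Real.sqrt (t ^ 2 + x' ^ 2 - 2 * t * x' * y))
        (1 / (2 * s) * (2 * x - 2 * t * y)) x := by
      exact (Real.hasDerivAt_sqrt hQ.ne').comp x hQ'
    have hu : HasDerivAt (fun x' : ℝ => x' * y - t) y x := by
      simpa using ((hasDerivAt_id x).mul_const y).sub_const t
    have hg' : HasDerivAt (fun x' : ℝ => (x' * y - t) /
        Real.sqrt (t ^ 2 + x' ^ 2 - 2 * t * x' * y))
        ((y * s - (x * y - t) * (1 / (2 * s) * (2 * x - 2 * t * y))) / s ^ 2) x :=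
      hu.div hv hs.ne'
    have hF := harc.comp x hg'
    have : (fun x' : ℝ => F x' y t) = Real.arccos ∘ (fun x' : ℝ => (x' * y - t) /
        Real.sqrt (t ^ 2 + x' ^ 2 - 2 * t * x' * y)) := rfl
    rw [this]
    refine hF.congr_deriv (Eq.symm ?_)
    rw [hkey, ← hs2]
    field_simp
    linear_combination (-t*x) * hw2 + y * hs2
  · -- derivative in t
    have hQ' : HasDerivAt (fun t' : ℝ => t' ^ 2 + x ^ 2 - 2 * t' * x * y)
        (2 * t - 2 * x * y) t := by
      have h1 := (((hasDerivAt_pow 2 t).add_const (x ^ 2))).sub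
        ((((hasDerivAt_id t).const_mul 2).mul_const x).mul_const y)
      refine h1.congr_deriv (Eq.symm ?_)
      push_cast
      ring
    have hv : HasDerivAt (fun t' : ℝ => Real.sqrt (t' ^ 2 + x ^ 2 - 2 * t' * x * y))
        (1 / (2 * s) * (2 * t - 2 * x * y)) t := by
      exact (Real.hasDerivAt_sqrt hQ.ne').comp t hQ'
    have hu : HasDerivAt (fun t' : ℝ => x * y - t') (-1) t := by
      simpa using (hasDerivAt_id t).const_sub (x * y)
    have hg' : HasDerivAt (fun t' : ℝ => (x * y - t') /
        Real.sqrt (t' ^ 2 + x ^ 2 - 2 * t' * x * y))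
        (((-1) * s - (x * y - t) * (1 / (2 * s) * (2 * t - 2 * x * y))) / s ^ 2) t :=
      hu.div hv hs.ne'
    have hF := harc.comp t hg'
    have : (fun t' : ℝ => F x y t') = Real.arccos ∘ (fun t' : ℝ => (x * y - t') /
        Real.sqrt (t' ^ 2 + x ^ 2 - 2 * t' * x * y)) := rfl
    rw [this]
    refine hF.congr_deriv (Eq.symm ?_)
    rw [hkey, ← hs2]
    field_simp
    linear_combination x^2 * hw2 - hs2
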